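/- If A, B ∈ ℂ^{m×m} satisfy σ̄(A)·σ̄(B) < 1, where σ̄ denotes the largest singular value (operator 2-norm), then SG(A) ∩ SG†(B) = ∅, and consequently det(I − AB) ≠ 0. -/

import Mathlib

open Matrix Complex

/-- Euclidean norm of a complex vector. -/
noncomputable def enorm' {m : ℕ} (x : Fin m → ℂ) : ℝ :=
  Real.sqrt (∑ i, Complex.normSq (x i))

/-- Real inner product Re(x* y). -/
noncomputable def rinner {m : ℕ} (x y : Fin m → ℂ) : ℝ :=
  (∑ i, (starRingEnd ℂ) (x i) * y i).re

/-- The gain γ(x, y) = ‖y‖₂ / ‖x‖₂. -/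
noncomputable def gain {m : ℕ} (x y : Fin m → ℂ) : ℝ := enorm' y / enorm' x

/-- The phase θ(x, y) = arccos(Re(x* y)/(‖x‖₂‖y‖₂)) ∈ [0, π]. -/
noncomputable def phase {m : ℕ} (x y : Fin m → ℂ) : ℝ :=
  Real.arccos (rinner x y / (enorm' x * enorm' y))

/-- The point γ(x,y)·e^{iθ(x,y)}. -/
noncomputable def sgPoint {m : ℕ} (x y : Fin m → ℂ) : ℂ :=
  (gain x y : ℂ) * Complex.exp (Complex.I * (phase x y : ℂ))

/-- The scaled graph SG(A). -/
noncomputable def SG {m : ℕ} (A : Matrix (Fin m) (Fin m) ℂ) : Set ℂ :=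
  {z | ∃ x : Fin m → ℂ, x ≠ 0 ∧ A.mulVec x ≠ 0 ∧
      (z = sgPoint x (A.mulVec x) ∨ z = (starRingEnd ℂ) (sgPoint x (A.mulVec x)))}

/-- The inverse scaled graph SG†(B). -/
noncomputable def SGdag {m : ℕ} (B : Matrix (Fin m) (Fin m) ℂ) : Set ℂ :=
  {z | ∃ x : Fin m → ℂ, x ≠ 0 ∧ B.mulVec x ≠ 0 ∧
      (z = sgPoint (B.mulVec x) x ∨ z = (starRingEnd ℂ) (sgPoint (B.mulVec x) x))}

lemma enorm'_eq {m : ℕ} (x : Fin m → ℂ) :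
    enorm' x = ‖(WithLp.equiv 2 (Fin m → ℂ)).symm x‖ := by
  rw [EuclideanSpace.norm_eq, enorm']
  congr 1
  refine Finset.sum_congr rfl fun i _ => ?_
  rw [Complex.normSq_eq_norm_sq]
  rfl

lemma enorm'_pos {m : ℕ} {x : Fin m → ℂ} (hx : x ≠ 0) : 0 < enorm' x := by
  rw [enorm'_eq]
  rw [norm_pos_iff]
  simpa using hx

lemma enorm'_mulVec_le {m : ℕ} (A : Matrix (Fin m) (Fin m) ℂ) (x : Fin m → ℂ) :
    enorm' (A.mulVec x) ≤ ‖Matrix.toEuclideanCLM (𝕜 := ℂ) (n := Fin m) A‖ * enorm' x := by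
  rw [enorm'_eq, enorm'_eq]
  have e : (WithLp.equiv 2 (Fin m → ℂ)).symm (A.mulVec x)
      = Matrix.toEuclideanCLM (𝕜 := ℂ) (n := Fin m) A ((WithLp.equiv 2 (Fin m → ℂ)).symm x) := rfl
  rw [e]
  exact (Matrix.toEuclideanCLM (𝕜 := ℂ) (n := Fin m) A).le_opNorm _

lemma abs_sgPoint {m : ℕ} (x y : Fin m → ℂ) : ‖sgPoint x y‖ = |gain x y| := by
  rw [sgPoint, norm_mul, Complex.norm_real, Real.norm_eq_abs]
  rw [show Complex.I * (phase x y : ℂ) = ((phase x y : ℝ) : ℂ) * Complex.I from by ring,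
    Complex.norm_exp_ofReal_mul_I, mul_one]

theorem small_gain_separation {m : ℕ} (A B : Matrix (Fin m) (Fin m) ℂ)
    (h : ‖Matrix.toEuclideanCLM (𝕜 := ℂ) (n := Fin m) A‖ *
         ‖Matrix.toEuclideanCLM (𝕜 := ℂ) (n := Fin m) B‖ < 1) :
    SG A ∩ SGdag B = ∅ ∧ (1 - A * B).det ≠ 0 := by
  set nA := ‖Matrix.toEuclideanCLM (𝕜 := ℂ) (n := Fin m) A‖ with hnA
  set nB := ‖Matrix.toEuclideanCLM (𝕜 := ℂ) (n := Fin m) B‖ with hnB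
  have hempty : SG A ∩ SGdag B = ∅ := by
    ext z
    simp only [Set.mem_inter_iff, Set.mem_empty_iff_false, iff_false, not_and]
    rintro ⟨x, hx, hAx, hz1⟩ ⟨y, hy, hBy, hz2⟩
    have habs1 : ‖z‖ = gain x (A.mulVec x) := by
      have hg : 0 ≤ gain x (A.mulVec x) :=
        div_nonneg ((enorm'_pos hAx).le) ((enorm'_pos hx).le)
      rcases hz1 with rfl | rfl
      · rw [abs_sgPoint, _root_.abs_of_nonneg hg]
      · rw [Complex.norm_conj, abs_sgPoint, _root_.abs_of_nonneg hg]
    have habs2 : ‖z‖ = gain (B.mulVec y) y := by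
      have hg : 0 ≤ gain (B.mulVec y) y :=
        div_nonneg ((enorm'_pos hy).le) ((enorm'_pos hBy).le)
      rcases hz2 with rfl | rfl
      · rw [abs_sgPoint, _root_.abs_of_nonneg hg]
      · rw [Complex.norm_conj, abs_sgPoint, _root_.abs_of_nonneg hg]
    have hBpos : 0 < nB := by
      by_contra hc
      push_neg at hc
      have : enorm' (B.mulVec y) ≤ 0 := by
        have := enorm'_mulVec_le B y
        nlinarith [enorm'_pos hy]
      exact absurd this (not_le.mpr (enorm'_pos hBy))
    have h1 : ‖z‖ ≤ nA := by
      rw [habs1, gain, div_le_iff₀ (enorm'_pos hx)]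
      exact enorm'_mulVec_le A x
    have h2 : enorm' y ≤ ‖z‖ * (nB * enorm' y) := by
      rw [habs2, gain, div_mul_eq_mul_div, le_div_iff₀ (enorm'_pos hBy)]
      calc enorm' y * enorm' (B.mulVec y) ≤ enorm' y * (nB * enorm' y) := by
            exact mul_le_mul_of_nonneg_left (enorm'_mulVec_le B y) (enorm'_pos hy).le
        _ = enorm' y * nB * enorm' y := by ring
        _ ≤ _ := by nlinarith [enorm'_pos hy, enorm'_pos hBy]
    nlinarith [mul_le_mul_of_nonneg_right h1 (mul_nonneg hBpos.le (enorm'_pos hy).le),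
      mul_lt_mul_of_pos_right h (enorm'_pos hy), enorm'_pos hy]
  refine ⟨hempty, ?_⟩
  intro hdet
  obtain ⟨v, hv, hv0⟩ := (Matrix.exists_mulVec_eq_zero_iff).mpr hdet
  have hABv : A.mulVec (B.mulVec v) = v := by
    have := hv0
    rw [Matrix.sub_mulVec, Matrix.one_mulVec, sub_eq_zero, ← Matrix.mulVec_mulVec] at this
    exact this.symm
  have hBv : B.mulVec v ≠ 0 := by
    intro hc
    apply hv
    rw [← hABv, hc, Matrix.mulVec_zero]
  have hzmem : sgPoint (B.mulVec v) v ∈ SG A ∩ SGdag B := by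
    constructor
    · exact ⟨B.mulVec v, hBv, by rw [hABv]; exact hv, Or.inl (by rw [hABv])⟩
    · exact ⟨v, hv, hBv, Or.inl rfl⟩
  rw [hempty] at hzmem
  exact hzmem
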